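/- Let α ∈ E. If there exist a positive integer n and an integer m such that τ_x^n(α) = q^m·α, then α = c·x^{m/n} for some c ∈ F; more precisely, α^n = c'·x^m for some c' ∈ F. -/

import Mathlib

/-- `E`, an algebraic closure of the rational function field `F(x)`. -/
noncomputable abbrev Ebar (F : Type*) [Field F] : Type _ := AlgebraicClosure (RatFunc F)

/-- The element `x` of `F(x) ⊆ E`. -/
noncomputable abbrev Ebar.x (F : Type*) [Field F] : Ebar F :=
  algebraMap (RatFunc F) (Ebar F) RatFunc.X

/-- The embedding of a constant `a ∈ F` into `E`. -/
noncomputable abbrev Ebar.c (F : Type*) [Field F] (a : F) : Ebar F :=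
  algebraMap (RatFunc F) (Ebar F) (RatFunc.C a)

open Polynomial

namespace QAux

variable {F : Type*} [Field F]

/-- The endomorphism of `F[X]` given by `p(X) ↦ p(cX)`. -/
noncomputable def scaleHom (c : F) : F[X] →+* F[X] := eval₂RingHom Polynomial.C (Polynomial.C c * X)

lemma coeff_scaleHom (c : F) (p : F[X]) (i : ℕ) :
    (scaleHom c p).coeff i = p.coeff i * c ^ i := by
  induction p using Polynomial.induction_on' with
  | add p q hp hq => simp [scaleHom, hp, hq, add_mul] at *
  | monomial j a =>
    simp only [scaleHom, coe_eval₂RingHom, eval₂_monomial, mul_pow, ← C_pow, ← C_mul,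
      mul_assoc]
    rw [← mul_assoc, ← C_mul, coeff_C_mul, coeff_X_pow, coeff_monomial]
    rcases eq_or_ne j i with rfl | hji
    · simp
    · simp [hji, hji.symm]

lemma scaleHom_injective {c : F} (hc : c ≠ 0) : Function.Injective (scaleHom c) := by
  intro p q hpq
  ext i
  have := congrArg (fun r => Polynomial.coeff r i) hpq
  simp only [coeff_scaleHom] at this
  exact mul_right_cancel₀ (pow_ne_zero i hc) this

lemma natDegree_scaleHom {c : F} (hc : c ≠ 0) (p : F[X]) :
    (scaleHom c p).natDegree = p.natDegree := by
  rcases eq_or_ne p 0 with rfl | hp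
  · simp [scaleHom]
  have hsp : scaleHom c p ≠ 0 := fun h => hp (scaleHom_injective hc (by simpa using h))
  apply le_antisymm
  · apply Polynomial.natDegree_le_iff_coeff_eq_zero.mpr
    intro N hN
    rw [coeff_scaleHom, Polynomial.coeff_eq_zero_of_natDegree_lt hN, zero_mul]
  · apply Polynomial.le_natDegree_of_ne_zero
    rw [coeff_scaleHom]
    exact mul_ne_zero (by simpa using Polynomial.leadingCoeff_ne_zero.mpr hp)
      (pow_ne_zero _ hc)


lemma pow_nat_injective {c : F} (hc : c ≠ 0) (hcru : ∀ k : ℕ, 0 < k → c ^ k ≠ 1)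
    {i j : ℕ} (hpow : c ^ i = c ^ j) : i = j := by
  have key : ∀ i j : ℕ, i < j → c ^ i = c ^ j → False := by
    intro i j hij hpow
    have : c ^ i * c ^ (j - i) = c ^ i * 1 := by
      rw [mul_one, ← pow_add, Nat.add_sub_cancel' hij.le]
      exact hpow.symm
    have h1 : c ^ (j - i) = 1 := mul_left_cancel₀ (pow_ne_zero i hc) this
    exact hcru (j - i) (Nat.sub_pos_of_lt hij) h1
  rcases lt_trichotomy i j with h | h | h
  · exact absurd (key i j h hpow) not_false
  · exact h
  · exact absurd (key j i h hpow.symm) not_false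

/-- If `p(cX) = a·p(X)` coefficientwise (i.e. each coefficient satisfies
`p_i c^i = p_i a`) and `c` is not a root of unity, then `p` is a monomial. -/
lemma eq_C_mul_X_pow {c : F} (hc : c ≠ 0) (hcru : ∀ k : ℕ, 0 < k → c ^ k ≠ 1)
    {p : F[X]} {a : F} (hp : p ≠ 0)
    (h : ∀ i, p.coeff i * c ^ i = p.coeff i * a) :
    p = Polynomial.C p.leadingCoeff * X ^ p.natDegree ∧ a = c ^ p.natDegree := by
  have hlc : p.leadingCoeff ≠ 0 := Polynomial.leadingCoeff_ne_zero.mpr hp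
  have ha : a = c ^ p.natDegree := by
    have := h p.natDegree
    rw [Polynomial.coeff_natDegree] at this
    exact (mul_left_cancel₀ hlc this).symm
  refine ⟨?_, ha⟩
  ext i
  rw [Polynomial.coeff_C_mul, Polynomial.coeff_X_pow]
  rcases eq_or_ne i p.natDegree with rfl | hi
  · simp [Polynomial.coeff_natDegree]
  · rcases eq_or_ne (p.coeff i) 0 with h0 | h0
    · simp [h0, hi]
    · exfalso
      have := h i
      rw [ha] at this
      have hpow : c ^ i = c ^ p.natDegree := mul_left_cancel₀ h0 (by linear_combination this)
      exact hi (pow_nat_injective hc hcru hpow)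

noncomputable def scaleHomRF (c : F) (hc : c ≠ 0) : RatFunc F →+* RatFunc F :=
  IsFractionRing.lift (g := (algebraMap F[X] (RatFunc F)).comp (scaleHom c))
    ((IsFractionRing.injective F[X] (RatFunc F)).comp (scaleHom_injective hc))

lemma scaleHomRF_algebraMap (c : F) (hc : c ≠ 0) (p : F[X]) :
    scaleHomRF c hc (algebraMap F[X] (RatFunc F) p)
      = algebraMap F[X] (RatFunc F) (scaleHom c p) :=
  IsFractionRing.lift_algebraMap _ _

lemma const_of_scaleHomRF_fixed {c : F} (hc : c ≠ 0) (hcru : ∀ k : ℕ, 0 < k → c ^ k ≠ 1)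
    {r : RatFunc F} (hr : scaleHomRF c hc r = r) :
    ∃ a : F, algebraMap F (RatFunc F) a = r := by
  rcases eq_or_ne r 0 with rfl | hr0
  · exact ⟨0, by simp⟩
  set N := r.num with hN
  set D := r.denom with hD
  have hD0 : D ≠ 0 := r.denom_ne_zero
  have hN0 : N ≠ 0 := RatFunc.num_ne_zero hr0
  have hinj : Function.Injective (algebraMap F[X] (RatFunc F)) :=
    IsFractionRing.injective F[X] (RatFunc F)
  have hDa : algebraMap F[X] (RatFunc F) D ≠ 0 := by
    simpa using hinj.ne_iff' (map_zero _) |>.mpr hD0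
  have hφD0 : scaleHom c D ≠ 0 := fun hone =>
    hD0 (scaleHom_injective hc (by simpa using hone))
  have hφDa : algebraMap F[X] (RatFunc F) (scaleHom c D) ≠ 0 := by
    simpa using hinj.ne_iff' (map_zero _) |>.mpr hφD0
  -- cross-multiplied equation
  have hcross : scaleHom c N * D = N * scaleHom c D := by
    apply hinj
    have h1 : scaleHomRF c hc (algebraMap _ _ N / algebraMap _ _ D)
        = algebraMap _ _ N / algebraMap _ _ D := by
      rw [RatFunc.num_div_denom]; exact hr
    rw [map_div₀, scaleHomRF_algebraMap, scaleHomRF_algebraMap,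
      div_eq_div_iff hφDa hDa] at h1
    simpa [map_mul] using h1
  -- D divides scaleHom c D
  have hcop : IsCoprime N D := r.isCoprime_num_denom
  have hDdvd : D ∣ scaleHom c D := by
    refine (hcop.symm).dvd_of_dvd_mul_left ?_
    exact ⟨scaleHom c N, by linear_combination -hcross⟩
  have hNdvd : N ∣ scaleHom c N := by
    refine hcop.dvd_of_dvd_mul_left ?_
    exact ⟨scaleHom c D, by linear_combination hcross⟩
  -- extract constants
  obtain ⟨t, ht⟩ := hDdvd
  obtain ⟨s, hs⟩ := hNdvd
  have ht0 : t ≠ 0 := by rintro rfl; exact hφD0 (by simp [ht])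
  have hφN0 : scaleHom c N ≠ 0 := fun hone =>
    hN0 (scaleHom_injective hc (by simpa using hone))
  have hs0 : s ≠ 0 := by rintro rfl; exact hφN0 (by simp [hs])
  have htdeg : t.natDegree = 0 := by
    have := natDegree_scaleHom hc D
    rw [ht, Polynomial.natDegree_mul hD0 ht0] at this
    omega
  have hsdeg : s.natDegree = 0 := by
    have := natDegree_scaleHom hc N
    rw [hs, Polynomial.natDegree_mul hN0 hs0] at this
    omega
  obtain ⟨a, rfl⟩ := Polynomial.natDegree_eq_zero.mp htdeg
  obtain ⟨b, rfl⟩ := Polynomial.natDegree_eq_zero.mp hsdeg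
  -- coefficientwise equations
  have hDc : ∀ i, D.coeff i * c ^ i = D.coeff i * a := by
    intro i
    have := congrArg (fun p => Polynomial.coeff p i) ht
    simpa [coeff_scaleHom, Polynomial.coeff_mul_C] using this
  have hNc : ∀ i, N.coeff i * c ^ i = N.coeff i * b := by
    intro i
    have := congrArg (fun p => Polynomial.coeff p i) hs
    simpa [coeff_scaleHom, Polynomial.coeff_mul_C] using this
  obtain ⟨hDmono, hav⟩ := eq_C_mul_X_pow hc hcru hD0 hDc
  obtain ⟨hNmono, hbv⟩ := eq_C_mul_X_pow hc hcru hN0 hNc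
  -- a = b
  have hab : a = b := by
    have : N * D * Polynomial.C a = N * D * Polynomial.C b := by
      have := hcross
      rw [ht, hs] at this
      linear_combination -this
    have := mul_left_cancel₀ (mul_ne_zero hN0 hD0) this
    exact Polynomial.C_injective this
  have hdeg_eq : N.natDegree = D.natDegree := by
    have hcc : c ^ N.natDegree = c ^ D.natDegree := by rw [← hbv, ← hav, hab]
    exact pow_nat_injective hc hcru hcc
  -- coprimality forces degree 0
  have hdeg0 : D.natDegree = 0 := by
    by_contra hd
    have hXD : X ∣ D := by
      rw [hDmono]
      exact dvd_mul_of_dvd_right (dvd_pow_self X hd) _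
    have hXN : X ∣ N := by
      rw [hNmono]
      exact dvd_mul_of_dvd_right (dvd_pow_self X (by omega : N.natDegree ≠ 0)) _
    exact Polynomial.not_isUnit_X (hcop.isUnit_of_dvd' hXN hXD)
  have hD1 : D = 1 := (r.monic_denom.natDegree_eq_zero).mp hdeg0
  refine ⟨N.coeff 0, ?_⟩
  rw [RatFunc.algebraMap_eq_C, ← RatFunc.algebraMap_C,
    ← Polynomial.eq_C_of_natDegree_eq_zero (by omega : N.natDegree = 0)]
  have := r.num_div_denom
  rw [← hD, ← hN, hD1] at this
  simpa using this

lemma exists_preimage_of_root {F E : Type*} [Field F] [IsAlgClosed F] [Field E]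
    (f : F →+* E) {p : F[X]} (hp : p ≠ 0) {β : E} (hroot : Polynomial.eval₂ f β p = 0) :
    ∃ a : F, f a = β := by
  have hs : p.Splits := IsAlgClosed.splits p
  have hmem : β ∈ (p.map f).roots := by
    rw [Polynomial.mem_roots ((Polynomial.map_ne_zero_iff f.injective).mpr hp)]
    rw [Polynomial.IsRoot, Polynomial.eval_map]
    exact hroot
  rw [hs.roots_map f] at hmem
  obtain ⟨a, -, ha⟩ := Multiset.mem_map.mp hmem
  exact ⟨a, ha⟩

lemma fixed_const_in_closure {F : Type*} [Field F] [IsAlgClosed F]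
    {c : F} (hc : c ≠ 0) (hcru : ∀ k : ℕ, 0 < k → c ^ k ≠ 1)
    (σ : AlgebraicClosure (RatFunc F) ≃+* AlgebraicClosure (RatFunc F))
    (hcomm : ∀ r : RatFunc F, σ (algebraMap (RatFunc F) (AlgebraicClosure (RatFunc F)) r)
        = algebraMap (RatFunc F) (AlgebraicClosure (RatFunc F)) (scaleHomRF c hc r))
    {β : AlgebraicClosure (RatFunc F)} (hβ : σ β = β) :
    ∃ a : F, algebraMap (RatFunc F) (AlgebraicClosure (RatFunc F)) (RatFunc.C a) = β := by
  have hint : IsIntegral (RatFunc F) β := Algebra.IsIntegral.isIntegral β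
  set p := minpoly (RatFunc F) β with hpdef
  set ψ := scaleHomRF c hc with hψdef
  have hmonic : p.Monic := minpoly.monic hint
  have hψ : (algebraMap (RatFunc F) (AlgebraicClosure (RatFunc F))).comp ψ = (σ : AlgebraicClosure (RatFunc F) →+* AlgebraicClosure (RatFunc F)).comp (algebraMap (RatFunc F) (AlgebraicClosure (RatFunc F))) :=
    RingHom.ext fun r => (hcomm r).symm
  have haev : Polynomial.aeval β (p.map ψ) = 0 := by
    rw [Polynomial.aeval_def, Polynomial.eval₂_map, hψ]
    have hhe := Polynomial.hom_eval₂
      (f := algebraMap (RatFunc F) (AlgebraicClosure (RatFunc F)))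
      (g := (σ : AlgebraicClosure (RatFunc F) →+* AlgebraicClosure (RatFunc F))) (p := p) (x := β)
    rw [← Polynomial.aeval_def, minpoly.aeval, map_zero] at hhe
    simp only [RingEquiv.coe_toRingHom] at hhe
    rw [hβ] at hhe
    exact hhe.symm
  have hmap : p.map ψ = p := by
    have hdvd : p ∣ p.map ψ := minpoly.dvd (RatFunc F) β haev
    obtain ⟨t, ht⟩ := hdvd
    have hdeg : (p.map ψ).natDegree = p.natDegree := Polynomial.natDegree_map _
    have hp0 : p ≠ 0 := hmonic.ne_zero
    have ht0 : t ≠ 0 := by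
      rintro rfl
      rw [mul_zero] at ht
      exact (hmonic.map ψ).ne_zero ht
    have htd : t.natDegree = 0 := by
      rw [ht, Polynomial.natDegree_mul hp0 ht0] at hdeg
      omega
    obtain ⟨u, rfl⟩ := Polynomial.natDegree_eq_zero.mp htd
    have hu1 : u = 1 := by
      have h1 : (p.map ψ).leadingCoeff = 1 := hmonic.map ψ
      rw [ht, Polynomial.leadingCoeff_mul, hmonic.leadingCoeff, one_mul,
        Polynomial.leadingCoeff_C] at h1
      exact h1
    rw [ht, hu1, map_one, mul_one]
  have hcoeff : ∀ i, p.coeff i ∈ Set.range (algebraMap F (RatFunc F)) := by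
    intro i
    have hfix : ψ (p.coeff i) = p.coeff i := by
      have := congrArg (fun q => Polynomial.coeff q i) hmap
      simpa [Polynomial.coeff_map] using this
    obtain ⟨a, ha⟩ := const_of_scaleHomRF_fixed hc hcru hfix
    exact ⟨a, ha⟩
  have hlift : p ∈ Polynomial.lifts (algebraMap F (RatFunc F)) :=
    (Polynomial.lifts_iff_coeff_lifts p).mpr hcoeff
  obtain ⟨p₀, hp₀⟩ := (Polynomial.mem_lifts p).mp hlift
  have hp₀0 : p₀ ≠ 0 := by
    rintro rfl
    rw [Polynomial.map_zero] at hp₀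
    exact hmonic.ne_zero hp₀.symm
  have hroot : Polynomial.eval₂ ((algebraMap (RatFunc F) (AlgebraicClosure (RatFunc F))).comp (algebraMap F (RatFunc F))) β p₀ = 0 := by
    rw [← Polynomial.eval₂_map, hp₀, ← Polynomial.aeval_def, minpoly.aeval]
  obtain ⟨a, ha⟩ := exists_preimage_of_root ((algebraMap (RatFunc F) (AlgebraicClosure (RatFunc F))).comp (algebraMap F (RatFunc F))) hp₀0 hroot
  refine ⟨a, ?_⟩
  rw [← RatFunc.algebraMap_eq_C]
  exact ha

lemma zpow_pow_comm {G : Type*} [GroupWithZero G] (a : G) (m : ℤ) (n : ℕ) :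
    (a ^ m) ^ n = (a ^ n) ^ m := by
  rw [← zpow_natCast (a ^ m), ← zpow_mul, mul_comm, zpow_mul, zpow_natCast]

end QAux


/-- Let `F` be an algebraically closed field of characteristic zero, `q ∈ F` nonzero
and not a root of unity, `E` the algebraic closure of `F(x)`, and `τ_x` an automorphism
of `E` fixing `F` with `τ_x(x) = q·x`.  If `α ∈ E` satisfies `τ_x^n(α) = q^m·α` for
some positive integer `n` and integer `m`, then `α = c·x^{m/n}` for some `c ∈ F`
(i.e. `α = c·z^m` for some `n`-th root `z` of `x`); more precisely `α^n = c'·x^m`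
for some `c' ∈ F`. -/
theorem power_of_x_of_qshift_eigenvalue
    (F : Type*) [Field F] [IsAlgClosed F] [CharZero F]
    (q : F) (hq0 : q ≠ 0) (hqru : ∀ k : ℕ, 0 < k → q ^ k ≠ 1)
    (τx : Ebar F ≃+* Ebar F)
    (hτxF : ∀ a : F, τx (Ebar.c F a) = Ebar.c F a)
    (hτxx : τx (Ebar.x F) = Ebar.c F q * Ebar.x F)
    (α : Ebar F) (n : ℕ) (hn : 0 < n) (m : ℤ)
    (h : (τx ^ n) α = Ebar.c F q ^ m * α) :
    (∃ (c : F) (z : Ebar F), z ^ n = Ebar.x F ∧ α = Ebar.c F c * z ^ m) ∧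
    (∃ c' : F, α ^ n = Ebar.c F c' * Ebar.x F ^ m) := by
  classical
  have hxne : Ebar.x F ≠ 0 := by
    simp only [Ebar.x, ne_eq, _root_.map_eq_zero]
    exact RatFunc.X_ne_zero
  have hcmap : ∀ a : F, a ≠ 0 → Ebar.c F a ≠ 0 := by
    intro a ha
    simp only [Ebar.c, ne_eq, _root_.map_eq_zero]
    exact ha
  have hcq : Ebar.c F q ≠ 0 := hcmap q hq0
  have hqn0 : q ^ n ≠ 0 := pow_ne_zero n hq0
  have hqnru : ∀ k : ℕ, 0 < k → (q ^ n) ^ k ≠ 1 := by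
    intro k hk
    rw [← pow_mul]
    exact hqru (n * k) (by positivity)
  -- behaviour of τx ^ k on constants and on x
  have hconst : ∀ (k : ℕ) (a : F), (τx ^ k) (Ebar.c F a) = Ebar.c F a := by
    intro k
    induction k with
    | zero => intro a; rw [pow_zero]; rfl
    | succ k ih =>
      intro a
      rw [pow_succ]
      have : (τx ^ k * τx) (Ebar.c F a) = (τx ^ k) (τx (Ebar.c F a)) := rfl
      rw [this, hτxF a, ih a]
  have hX : ∀ k : ℕ, (τx ^ k) (Ebar.x F) = Ebar.c F (q ^ k) * Ebar.x F := by
    intro k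
    induction k with
    | zero =>
      rw [pow_zero, pow_zero]
      have h1 : (1 : Ebar F ≃+* Ebar F) (Ebar.x F) = Ebar.x F := rfl
      rw [h1]
      simp [Ebar.c]
    | succ k ih =>
      rw [pow_succ]
      have : (τx ^ k * τx) (Ebar.x F) = (τx ^ k) (τx (Ebar.x F)) := rfl
      rw [this, hτxx, map_mul, hconst k q, ih, pow_succ]
      simp only [Ebar.c, map_mul]
      ring
  -- τx ^ n intertwines the scaling automorphism of F(x)
  set ψ := QAux.scaleHomRF (q ^ n) hqn0 with hψdef
  have hcommσ : ∀ r : RatFunc F,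
      (τx ^ n) (algebraMap (RatFunc F) (Ebar F) r)
        = algebraMap (RatFunc F) (Ebar F) (ψ r) := by
    have main : ((τx ^ n : Ebar F ≃+* Ebar F) : Ebar F →+* Ebar F).comp
          (algebraMap (RatFunc F) (Ebar F))
        = (algebraMap (RatFunc F) (Ebar F)).comp ψ := by
      apply IsLocalization.ringHom_ext (nonZeroDivisors (Polynomial F))
      apply Polynomial.ringHom_ext
      · intro a
        have h1 : algebraMap (Polynomial F) (RatFunc F) (Polynomial.C a) = RatFunc.C a :=
          RatFunc.algebraMap_C a
        have h2 : ψ (algebraMap (Polynomial F) (RatFunc F) (Polynomial.C a))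
            = algebraMap (Polynomial F) (RatFunc F) (Polynomial.C a) := by
          rw [hψdef, QAux.scaleHomRF_algebraMap]
          congr 1
          simp [QAux.scaleHom]
        simp only [RingHom.coe_comp, Function.comp_apply, RingEquiv.coe_toRingHom]
        rw [h2, h1]
        exact hconst n a
      · have h1 : algebraMap (Polynomial F) (RatFunc F) Polynomial.X = RatFunc.X :=
          RatFunc.algebraMap_X
        have h2 : ψ (algebraMap (Polynomial F) (RatFunc F) Polynomial.X)
            = algebraMap (Polynomial F) (RatFunc F) (Polynomial.C (q ^ n) * Polynomial.X) := by
          rw [hψdef, QAux.scaleHomRF_algebraMap]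
          congr 1
          simp [QAux.scaleHom]
        simp only [RingHom.coe_comp, Function.comp_apply, RingEquiv.coe_toRingHom]
        rw [h2, h1, hX n]
        simp only [Ebar.c, Ebar.x, map_mul, RatFunc.algebraMap_C, RatFunc.algebraMap_X]
    intro r
    exact RingHom.congr_fun main r
  -- the fixed element β = αⁿ / x^m
  set β : Ebar F := α ^ n / Ebar.x F ^ m with hβdef
  have hσβ : (τx ^ n) β = β := by
    have hnum : (τx ^ n) (α ^ n) = (Ebar.c F q ^ m) ^ n * α ^ n := by
      rw [map_pow, h, mul_pow]
    have hden : (τx ^ n) (Ebar.x F ^ m) = (Ebar.c F q ^ n) ^ m * Ebar.x F ^ m := by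
      rw [map_zpow₀, hX n, mul_zpow]
      simp only [Ebar.c, map_pow]
    rw [hβdef, map_div₀, hnum, hden, QAux.zpow_pow_comm]
    rw [mul_div_mul_left _ _ (by
      apply zpow_ne_zero
      exact pow_ne_zero n hcq)]
  obtain ⟨c', hc'⟩ := QAux.fixed_const_in_closure hqn0 hqnru (τx ^ n) hcommσ hσβ
  have hxm : Ebar.x F ^ m ≠ 0 := zpow_ne_zero m hxne
  have second : α ^ n = Ebar.c F c' * Ebar.x F ^ m := by
    have : Ebar.c F c' = α ^ n / Ebar.x F ^ m := hc'
    rw [this, div_mul_cancel₀ _ hxm]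
  refine ⟨?_, ⟨c', second⟩⟩
  -- first part
  obtain ⟨z, hz⟩ := IsAlgClosed.exists_pow_nat_eq (Ebar.x F) hn
  have hzne : z ≠ 0 := by
    rintro rfl
    exact hxne (by rw [← hz, zero_pow hn.ne'])
  by_cases hc'0 : c' = 0
  · have hα0 : α = 0 := by
      have hαn : α ^ n = 0 := by
        rw [second, hc'0]
        simp [Ebar.c]
      exact pow_eq_zero_iff hn.ne' |>.mp hαn
    exact ⟨0, z, hz, by simp [hα0, Ebar.c]⟩
  · obtain ⟨d, hd⟩ := IsAlgClosed.exists_pow_nat_eq c' hn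
    have hd0 : d ≠ 0 := by
      rintro rfl
      exact hc'0 (by rw [← hd, zero_pow hn.ne'])
    have hden : Ebar.c F d * z ^ m ≠ 0 :=
      mul_ne_zero (hcmap d hd0) (zpow_ne_zero m hzne)
    set w : Ebar F := α / (Ebar.c F d * z ^ m) with hw
    have hαn0 : α ^ n ≠ 0 := by
      rw [second]
      exact mul_ne_zero (hcmap c' hc'0) hxm
    have hcd : Ebar.c F d ^ n = Ebar.c F c' := by
      simp only [Ebar.c, ← map_pow, hd]
    have hwn : w ^ n = 1 := by
      rw [hw, div_pow, mul_pow, QAux.zpow_pow_comm, hz, hcd, ← second, div_self hαn0]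
    set fF : F →+* Ebar F := (algebraMap (RatFunc F) (Ebar F)).comp RatFunc.C with hfF
    have hpne : (Polynomial.X ^ n - 1 : Polynomial F) ≠ 0 := by
      have hmon := Polynomial.monic_X_pow_sub_C (1 : F) hn.ne'
      rw [Polynomial.C_1] at hmon
      exact hmon.ne_zero
    have hroot : Polynomial.eval₂ fF w (Polynomial.X ^ n - 1) = 0 := by
      simp [hwn]
    obtain ⟨ζ, hζ⟩ := QAux.exists_preimage_of_root fF hpne hroot
    refine ⟨d * ζ, z, hz, ?_⟩
    have hαw : α = Ebar.c F d * z ^ m * w := by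
      rw [hw, mul_comm, div_mul_cancel₀ _ hden]
    have hfζ : fF ζ = Ebar.c F ζ := rfl
    rw [hαw, ← hζ, hfζ]
    simp only [Ebar.c, map_mul]
    ring
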